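/- Let G be a group, F a field, and σ a nonzero F[G]-module that is finite-dimensional over F and satisfies End_{F[G]}(σ) = F (every F[G]-module endomorphism of σ is multiplication by a scalar). Let M be an F[G]-module such that the natural evaluation map σ ⊗_F Hom_{F[G]}(σ, M) → M, s ⊗ φ ↦ φ(s), is an isomorphism (i.e., M is σ-typic). If M' ⊆ M is an F[G]-submodule which is a direct summand of M (there exists an F[G]-submodule M'' with M = M' ⊕ M''), then the evaluation map σ ⊗_F Hom_{F[G]}(σ, M') → M' is also an isomorphism; in particular M' is σ-typic. -/

import Mathlib

open TensorProduct

/-- The `F`-submodule of `F[G]`-module homomorphisms (equivariant `F`-linear maps)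
between two representations. -/
def equivHom {F : Type*} [Field F] {G : Type*} [Group G]
    {S M : Type*} [AddCommGroup S] [Module F S] [AddCommGroup M] [Module F M]
    (ρ : Representation F G S) (τ : Representation F G M) :
    Submodule F (S →ₗ[F] M) where
  carrier := {φ | ∀ (g : G) (s : S), φ (ρ g s) = τ g (φ s)}
  add_mem' := by
    intro φ ψ hφ hψ g s
    simp [hφ g s, hψ g s]
  zero_mem' := by intro g s; simp
  smul_mem' := by
    intro c φ hφ g s
    simp [hφ g s]

/-- The evaluation map `σ ⊗_F Hom_{F[G]}(σ, M) → M`, `s ⊗ φ ↦ φ(s)`. -/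
noncomputable def evalMap {F : Type*} [Field F] {G : Type*} [Group G]
    {S M : Type*} [AddCommGroup S] [Module F S] [AddCommGroup M] [Module F M]
    (ρ : Representation F G S) (τ : Representation F G M) :
    S ⊗[F] ↥(equivHom ρ τ) →ₗ[F] M :=
  TensorProduct.lift (Submodule.subtype (equivHom ρ τ)).flip

/-- The restriction of a representation to an invariant submodule. -/
def subRep {F : Type*} [Field F] {G : Type*} [Group G]
    {M : Type*} [AddCommGroup M] [Module F M]
    (τ : Representation F G M) (N : Submodule F M) (hN : ∀ g, ∀ x ∈ N, τ g x ∈ N) :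
    Representation F G ↥N where
  toFun g := (τ g).restrict (hN g)
  map_one' := by
    refine LinearMap.ext fun x => Subtype.ext ?_
    show τ 1 x.1 = x.1
    rw [map_one]
    rfl
  map_mul' := by
    intro g h
    refine LinearMap.ext fun x => Subtype.ext ?_
    show τ (g * h) x.1 = τ g (τ h x.1)
    rw [map_mul]
    rfl


section aux
variable {F : Type*} [Field F] {G : Type*} [Group G]
  {M : Type*} [AddCommGroup M] [Module F M]

lemma proj_comm (τ : Representation F G M) (M' M'' : Submodule F M)
    (hM' : ∀ g, ∀ x ∈ M', τ g x ∈ M') (hM'' : ∀ g, ∀ x ∈ M'', τ g x ∈ M'')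
    (h : IsCompl M' M'') (g : G) (x : M) :
    (M'.projectionOnto M'' h (τ g x) : M) = τ g (M'.projectionOnto M'' h x) := by
  set p := M'.projectionOnto M'' h with hp
  have h1 : x - (p x : M) ∈ M'' := by
    rw [← Submodule.projectionOnto_apply_eq_zero_iff h, ← hp, map_sub]
    have := Submodule.projectionOnto_apply_left h (p x)
    rw [← hp] at this
    rw [this, sub_self]
  have h2 : τ g x = τ g (p x : M) + τ g (x - (p x : M)) := by
    rw [← map_add]; congr 1; abel
  rw [h2, map_add]
  have h3 : p (τ g (p x : M)) = ⟨τ g (p x : M), hM' g _ (p x).2⟩ :=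
    Submodule.projectionOnto_apply_left h ⟨_, hM' g _ (p x).2⟩
  have h4 : p (τ g (x - (p x : M))) = 0 :=
    Submodule.projectionOnto_apply_of_mem_right h (hM'' g _ h1)
  rw [h3, h4, add_zero]
end aux

section aux2
variable {F : Type*} [Field F] {G : Type*} [Group G]
  {S : Type*} [AddCommGroup S] [Module F S] (ρ : Representation F G S)
  {M : Type*} [AddCommGroup M] [Module F M] (τ : Representation F G M)
  (M' : Submodule F M) (hM' : ∀ g, ∀ x ∈ M', τ g x ∈ M')

/-- Inclusion of equivariant hom spaces induced by a submodule inclusion. -/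
def homInc : ↥(equivHom ρ (subRep τ M' hM')) →ₗ[F] ↥(equivHom ρ τ) where
  toFun φ := ⟨M'.subtype ∘ₗ φ.1, fun g s => by
    simp only [LinearMap.comp_apply, Submodule.subtype_apply]
    rw [φ.2 g s]; rfl⟩
  map_add' φ ψ := rfl
  map_smul' c φ := rfl

lemma homInc_injective : Function.Injective (homInc ρ τ M' hM') := by
  intro φ ψ h
  refine Subtype.ext ?_
  ext s
  exact congrArg (fun f => (f : ↥(equivHom ρ τ)).1 s) h

lemma key1 : M'.subtype ∘ₗ evalMap ρ (subRep τ M' hM')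
    = evalMap ρ τ ∘ₗ LinearMap.lTensor S (homInc ρ τ M' hM') := by
  refine TensorProduct.ext' fun s φ => ?_
  simp [evalMap, homInc]
  rfl

/-- Projection of equivariant hom spaces induced by an equivariant projection. -/
noncomputable def homProj (M'' : Submodule F M) (hM'' : ∀ g, ∀ x ∈ M'', τ g x ∈ M'')
    (hcompl : IsCompl M' M'') : ↥(equivHom ρ τ) →ₗ[F] ↥(equivHom ρ (subRep τ M' hM')) where
  toFun φ := ⟨M'.linearProjOfIsCompl M'' hcompl ∘ₗ φ.1, fun g s => by
    refine Subtype.ext ?_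
    show (M'.linearProjOfIsCompl M'' hcompl (φ.1 (ρ g s)) : M)
      = τ g (M'.linearProjOfIsCompl M'' hcompl (φ.1 s) : M)
    rw [φ.2 g s]
    exact proj_comm τ M' M'' hM' hM'' hcompl g (φ.1 s)⟩
  map_add' φ ψ := Subtype.ext (by ext s; simp)
  map_smul' c φ := Subtype.ext (by ext s; simp)

lemma key2 (M'' : Submodule F M) (hM'' : ∀ g, ∀ x ∈ M'', τ g x ∈ M'')
    (hcompl : IsCompl M' M'') :
    M'.subtype ∘ₗ evalMap ρ (subRep τ M' hM')
      ∘ₗ LinearMap.lTensor S (homProj ρ τ M' hM' M'' hM'' hcompl)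
    = (M'.subtype ∘ₗ M'.linearProjOfIsCompl M'' hcompl) ∘ₗ evalMap ρ τ := by
  refine TensorProduct.ext' fun s φ => ?_
  simp [evalMap, homProj]

end aux2

/-- Let `σ` (a representation `ρ` on `S`) be nonzero, finite-dimensional
with `End_{F[G]}(σ) = F`, and let `M` (with representation `τ`) be `σ`-typic, i.e. the
evaluation map `σ ⊗_F Hom_{F[G]}(σ, M) → M` is an isomorphism.  If `M' ⊆ M` is an
`F[G]`-submodule which is a direct summand of `M`, then the evaluation map
`σ ⊗_F Hom_{F[G]}(σ, M') → M'` is also an isomorphism; in particular `M'` is `σ`-typic. -/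
theorem statement8 {F : Type*} [Field F] {G : Type*} [Group G]
    {S : Type*} [AddCommGroup S] [Module F S] (ρ : Representation F G S)
    [Nontrivial S] [FiniteDimensional F S]
    (hEnd : ∀ φ : S →ₗ[F] S, (∀ (g : G) (s : S), φ (ρ g s) = ρ g (φ s)) →
      ∃ c : F, φ = c • LinearMap.id)
    {M : Type*} [AddCommGroup M] [Module F M] (τ : Representation F G M)
    (htypic : Function.Bijective (evalMap ρ τ))
    (M' : Submodule F M) (hM' : ∀ g, ∀ x ∈ M', τ g x ∈ M')
    (hsummand : ∃ M'' : Submodule F M, (∀ g, ∀ x ∈ M'', τ g x ∈ M'') ∧ IsCompl M' M'') :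
    Function.Bijective (evalMap ρ (subRep τ M' hM'))  := by
  classical
  obtain ⟨M'', hM''inv, hcompl⟩ := hsummand
  constructor
  · have hl : Function.Injective (LinearMap.lTensor S (homInc ρ τ M' hM')) :=
      Module.Flat.lTensor_preserves_injective_linearMap _ (homInc_injective ρ τ M' hM')
    have hcomp : Function.Injective
        (evalMap ρ τ ∘ₗ LinearMap.lTensor S (homInc ρ τ M' hM')) :=
      htypic.1.comp hl
    rw [← key1] at hcomp
    rw [LinearMap.coe_comp] at hcomp
    exact Function.Injective.of_comp hcomp
  · intro y
    obtain ⟨t, ht⟩ := htypic.2 (y : M)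
    refine ⟨LinearMap.lTensor S (homProj ρ τ M' hM' M'' hM''inv hcompl) t, Subtype.ext ?_⟩
    have := congrArg (fun f => f t) (key2 ρ τ M' hM' M'' hM''inv hcompl)
    simp only [LinearMap.comp_apply, Submodule.subtype_apply] at this
    rw [this, ht]
    exact congrArg _ (Submodule.linearProjOfIsCompl_apply_left hcompl y)
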